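/- arXiv:2106.07146 — 5 statements merged into one kernel-verified Lean document; each statement's English description precedes it below -/
import Mathlib

section
/- Let ν̂ be a symmetric probability measure on ℝ (invariant under x ↦ −x) with finite second moment, and let ε > 0. Then the double integral ∬ ((x/(ε+x²)) − (y/(ε+y²)))/(x−y) dν̂(x) dν̂(y) = ε (∫ 1/(ε+x²) dν̂(x))², and in particular it is nonnegative. -/
open MeasureTheory

theorem stmt3 (ν : Measure ℝ) [IsProbabilityMeasure ν]
    (hsym : ν.map (fun x : ℝ => -x) = ν)
    (hmom : Integrable (fun x : ℝ => x ^ 2) ν)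
    (ε : ℝ) (hε : 0 < ε) :
    (∫ x, ∫ y, (ε - x * y) / ((ε + x ^ 2) * (ε + y ^ 2)) ∂ν ∂ν
        = ε * (∫ x, 1 / (ε + x ^ 2) ∂ν) ^ 2)
    ∧ 0 ≤ ∫ x, ∫ y, (ε - x * y) / ((ε + x ^ 2) * (ε + y ^ 2)) ∂ν ∂ν := by
  have hεd : ∀ x : ℝ, 0 < ε + x ^ 2 := fun x => by positivity
  have hcont1 : Continuous (fun y : ℝ => 1 / (ε + y ^ 2)) :=
    continuous_const.div (by continuity) (fun y => (hεd y).ne')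
  have hcont2 : Continuous (fun y : ℝ => y / (ε + y ^ 2)) :=
    continuous_id.div (by continuity) (fun y => (hεd y).ne')
  have h1 : Integrable (fun y : ℝ => 1 / (ε + y ^ 2)) ν := by
    apply (integrable_const (1/ε)).mono' hcont1.aestronglyMeasurable
    filter_upwards with y
    rw [Real.norm_eq_abs, abs_of_nonneg (by positivity)]
    apply div_le_div_of_nonneg_left one_pos.le hε
    nlinarith [sq_nonneg y]
  have h2 : Integrable (fun y : ℝ => y / (ε + y ^ 2)) ν := by
    apply (integrable_const (1/(2*Real.sqrt ε))).mono' hcont2.aestronglyMeasurable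
    filter_upwards with y
    have hs : Real.sqrt ε ^ 2 = ε := Real.sq_sqrt hε.le
    have hspos : 0 < Real.sqrt ε := Real.sqrt_pos.mpr hε
    rw [Real.norm_eq_abs, abs_div, abs_of_nonneg (hεd y).le,
      div_le_div_iff₀ (hεd y) (by positivity)]
    nlinarith [sq_nonneg (Real.sqrt ε - |y|), sq_abs y, abs_nonneg y]
  set I := ∫ y, 1 / (ε + y ^ 2) ∂ν with hI
  have hInn : 0 ≤ I := integral_nonneg fun y => by positivity
  have hJ : (∫ y, y / (ε + y ^ 2) ∂ν) = 0 := by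
    have hm : (∫ y, y / (ε + y ^ 2) ∂(ν.map (fun x : ℝ => -x)))
        = ∫ y, (-y) / (ε + (-y) ^ 2) ∂ν :=
      integral_map measurable_neg.aemeasurable hcont2.aestronglyMeasurable
    rw [hsym] at hm
    have : ∀ y : ℝ, (-y) / (ε + (-y) ^ 2) = -(y / (ε + y ^ 2)) := by
      intro y; rw [neg_sq]; ring
    simp_rw [this, integral_neg] at hm
    linarith
  have hinner : ∀ x : ℝ, (∫ y, (ε - x * y) / ((ε + x ^ 2) * (ε + y ^ 2)) ∂ν)
      = (ε * I) * (1 / (ε + x ^ 2)) := by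
    intro x
    have hq : ∀ y : ℝ, (ε - x * y) / ((ε + x ^ 2) * (ε + y ^ 2))
        = (ε * (1 / (ε + y ^ 2)) - x * (y / (ε + y ^ 2))) / (ε + x ^ 2) := by
      intro y
      field_simp
    simp_rw [hq]
    rw [integral_div, integral_sub (h1.const_mul ε) (h2.const_mul x),
      integral_const_mul, integral_const_mul, hJ, mul_zero, sub_zero]
    ring
  simp_rw [hinner]
  rw [integral_const_mul]
  constructor
  · rw [← hI]; ring
  · positivity
end

section
/- Let x(t) = (x_1(t),…,x_n(t)) and x̃(t) = (x̃_1(t),…,x̃_n(t)) be two solutions of the Dyson Brownian motion dx_i = dW_i/√(βn) + (1/(2n))∑_{j≠i} dt/(x_i − x_j) driven by the same Brownian motions, both with strictly ordered particles for t > 0. Then t ↦ ∑_{i=1}^n (x̃_i(t) − x_i(t))² is nonincreasing; equivalently (d/dt)∑_i(x̃_i(t)−x_i(t))² = −(1/n)∑_{i<j} ((x̃_i−x_i)−(x̃_j−x_j))²/((x̃_i−x̃_j)(x_i−x_j)) ≤ 0. -/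
open Finset

/-- Two Dyson Brownian motions driven by the same noise: the squared distance between
particle configurations is nonincreasing, with explicit nonpositive derivative. -/
theorem stmt5 (n : ℕ) (hn : 1 ≤ n) (β : ℝ) (hβ : 1 ≤ β) (T : ℝ) (hT : 0 < T)
    (x xt : Fin n → ℝ → ℝ)
    (hord : ∀ t ∈ Set.Icc (0:ℝ) T, ∀ i j : Fin n, i < j → x j t < x i t)
    (hordt : ∀ t ∈ Set.Icc (0:ℝ) T, ∀ i j : Fin n, i < j → xt j t < xt i t)
    (hdiff : ∀ i : Fin n, ∀ t ∈ Set.Icc (0:ℝ) T,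
      HasDerivAt (fun u => xt i u - x i u)
        ((1 / (2 * (n:ℝ))) * ∑ j ∈ Finset.univ.filter (fun j => j ≠ i),
          (1 / (xt i t - xt j t) - 1 / (x i t - x j t))) t) :
    (∀ t ∈ Set.Icc (0:ℝ) T,
      HasDerivAt (fun u => ∑ i : Fin n, (xt i u - x i u) ^ 2)
        (-(1 / (n:ℝ)) * ∑ i : Fin n, ∑ j ∈ Finset.univ.filter (fun j => i < j),
            ((xt i t - x i t) - (xt j t - x j t)) ^ 2
              / ((xt i t - xt j t) * (x i t - x j t))) t
      ∧ -(1 / (n:ℝ)) * ∑ i : Fin n, ∑ j ∈ Finset.univ.filter (fun j => i < j),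
            ((xt i t - x i t) - (xt j t - x j t)) ^ 2
              / ((xt i t - xt j t) * (x i t - x j t)) ≤ 0)
    ∧ AntitoneOn (fun t => ∑ i : Fin n, (xt i t - x i t) ^ 2) (Set.Icc (0:ℝ) T) := by
  have hnpos : (0:ℝ) < (n:ℝ) := by exact_mod_cast Nat.lt_of_lt_of_le Nat.zero_lt_one hn
  have hn0 : (n:ℝ) ≠ 0 := ne_of_gt hnpos
  have hApos : ∀ t ∈ Set.Icc (0:ℝ) T, ∀ i j : Fin n, i < j → 0 < xt i t - xt j t :=
    fun t ht i j h => sub_pos.2 (hordt t ht i j h)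
  have hBpos : ∀ t ∈ Set.Icc (0:ℝ) T, ∀ i j : Fin n, i < j → 0 < x i t - x j t :=
    fun t ht i j h => sub_pos.2 (hord t ht i j h)
  have hA : ∀ t ∈ Set.Icc (0:ℝ) T, ∀ i j : Fin n, i ≠ j → xt i t - xt j t ≠ 0 := by
    intro t ht i j hij
    rcases lt_or_gt_of_ne hij with h | h
    · exact ne_of_gt (hApos t ht i j h)
    · exact ne_of_lt (sub_neg.2 (hordt t ht j i h))
  have hB : ∀ t ∈ Set.Icc (0:ℝ) T, ∀ i j : Fin n, i ≠ j → x i t - x j t ≠ 0 := by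
    intro t ht i j hij
    rcases lt_or_gt_of_ne hij with h | h
    · exact ne_of_gt (hBpos t ht i j h)
    · exact ne_of_lt (sub_neg.2 (hord t ht j i h))
  -- the main pointwise statement
  have main : ∀ t ∈ Set.Icc (0:ℝ) T,
      HasDerivAt (fun u => ∑ i : Fin n, (xt i u - x i u) ^ 2)
        (-(1 / (n:ℝ)) * ∑ i : Fin n, ∑ j ∈ Finset.univ.filter (fun j => i < j),
            ((xt i t - x i t) - (xt j t - x j t)) ^ 2
              / ((xt i t - xt j t) * (x i t - x j t))) t := by
    intro t ht
    have hder : HasDerivAt (fun u => ∑ i : Fin n, (xt i u - x i u) ^ 2)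
        (∑ i : Fin n, 2 * (xt i t - x i t) *
          ((1 / (2 * (n:ℝ))) * ∑ j ∈ Finset.univ.filter (fun j => j ≠ i),
            (1 / (xt i t - xt j t) - 1 / (x i t - x j t)))) t := by
      apply HasDerivAt.fun_sum
      intro i _
      have := (hdiff i t ht).fun_pow 2
      simpa [pow_one, mul_assoc, mul_comm, mul_left_comm] using this
    convert hder using 1
    -- algebraic identity
    set f : Fin n → ℝ := fun i => xt i t - x i t with hf
    set c : Fin n → Fin n → ℝ :=
      fun i j => -(1/(n:ℝ)) * (f i * (f i - f j) / ((xt i t - xt j t) * (x i t - x j t))) with hc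
    have step1 : ∀ i : Fin n,
        2 * f i * ((1 / (2 * (n:ℝ))) * ∑ j ∈ Finset.univ.filter (fun j => j ≠ i),
            (1 / (xt i t - xt j t) - 1 / (x i t - x j t)))
        = ∑ j ∈ Finset.univ.filter (fun j => j ≠ i), c i j := by
      intro i
      rw [Finset.mul_sum, Finset.mul_sum]
      apply Finset.sum_congr rfl
      intro j hj
      have hij : j ≠ i := (Finset.mem_filter.1 hj).2
      have ha := hA t ht i j (Ne.symm hij)
      have hb := hB t ht i j (Ne.symm hij)
      simp only [hc]
      field_simp
      ring
    have split : ∀ i : Fin n,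
        ∑ j ∈ Finset.univ.filter (fun j => j ≠ i), c i j
        = ∑ j ∈ Finset.univ.filter (fun j => i < j), c i j
          + ∑ j ∈ Finset.univ.filter (fun j => j < i), c i j := by
      intro i
      rw [← Finset.sum_union]
      · apply Finset.sum_congr _ (fun _ _ => rfl)
        ext j
        simp only [Finset.mem_filter, Finset.mem_union, Finset.mem_univ, true_and]
        constructor
        · intro h; exact (Ne.lt_or_gt h).symm
        · rintro (h | h)
          · exact ne_of_gt h
          · exact ne_of_lt h
      · rw [Finset.disjoint_filter]
        intro j _ h1 h2
        exact absurd h1 (lt_asymm h2)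
    have swap : ∑ i : Fin n, ∑ j ∈ Finset.univ.filter (fun j => j < i), c i j
        = ∑ i : Fin n, ∑ j ∈ Finset.univ.filter (fun j => i < j), c j i := by
      rw [Finset.sum_comm' (t' := (Finset.univ : Finset (Fin n)))
        (s' := fun j => Finset.univ.filter (fun i => j < i))]
      intro i j
      simp
    calc -(1 / (n:ℝ)) * ∑ i : Fin n, ∑ j ∈ Finset.univ.filter (fun j => i < j),
            ((xt i t - x i t) - (xt j t - x j t)) ^ 2
              / ((xt i t - xt j t) * (x i t - x j t))
        = ∑ i : Fin n, ∑ j ∈ Finset.univ.filter (fun j => i < j), (c i j + c j i) := by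
          rw [Finset.mul_sum]
          apply Finset.sum_congr rfl
          intro i _
          rw [Finset.mul_sum]
          apply Finset.sum_congr rfl
          intro j hj
          have hij : i < j := (Finset.mem_filter.1 hj).2
          have ha := hA t ht i j (ne_of_lt hij)
          have hb := hB t ht i j (ne_of_lt hij)
          have ha' : xt j t - xt i t = -(xt i t - xt j t) := by ring
          have hb' : x j t - x i t = -(x i t - x j t) := by ring
          simp only [hc, hf]
          rw [ha', hb', neg_mul_neg]
          ring
      _ = ∑ i : Fin n, ∑ j ∈ Finset.univ.filter (fun j => i < j), c i j
          + ∑ i : Fin n, ∑ j ∈ Finset.univ.filter (fun j => i < j), c j i := by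
          rw [← Finset.sum_add_distrib]
          apply Finset.sum_congr rfl
          intro i _
          rw [Finset.sum_add_distrib]
      _ = ∑ i : Fin n, ∑ j ∈ Finset.univ.filter (fun j => j ≠ i), c i j := by
          rw [← swap, ← Finset.sum_add_distrib]
          apply Finset.sum_congr rfl
          intro i _
          rw [split i]
      _ = ∑ i : Fin n, 2 * (xt i t - x i t) *
          ((1 / (2 * (n:ℝ))) * ∑ j ∈ Finset.univ.filter (fun j => j ≠ i),
            (1 / (xt i t - xt j t) - 1 / (x i t - x j t))) := by
          apply Finset.sum_congr rfl
          intro i _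
          exact (step1 i).symm
  have nonpos : ∀ t ∈ Set.Icc (0:ℝ) T,
      -(1 / (n:ℝ)) * ∑ i : Fin n, ∑ j ∈ Finset.univ.filter (fun j => i < j),
            ((xt i t - x i t) - (xt j t - x j t)) ^ 2
              / ((xt i t - xt j t) * (x i t - x j t)) ≤ 0 := by
    intro t ht
    rw [neg_mul]
    apply neg_nonpos.2
    apply mul_nonneg (by positivity)
    apply Finset.sum_nonneg
    intro i _
    apply Finset.sum_nonneg
    intro j hj
    have hij : i < j := (Finset.mem_filter.1 hj).2
    exact div_nonneg (sq_nonneg _)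
      (le_of_lt (mul_pos (hApos t ht i j hij) (hBpos t ht i j hij)))
  refine ⟨fun t ht => ⟨main t ht, nonpos t ht⟩, ?_⟩
  apply antitoneOn_of_deriv_nonpos (convex_Icc 0 T)
  · intro t ht
    exact (main t ht).continuousAt.continuousWithinAt
  · intro t ht
    have ht' : t ∈ Set.Icc (0:ℝ) T := interior_subset ht
    exact (main t ht').differentiableAt.differentiableWithinAt
  · intro t ht
    have ht' : t ∈ Set.Icc (0:ℝ) T := interior_subset ht
    rw [(main t ht').deriv]
    exact nonpos t ht'
end

section
/- Let s(t) and s̃(t) be two solutions of the Dyson Bessel process ds_i = dW_i/√(βn) + [(1/(2n))∑_{j≠i} 1/(s_i−s_j) + (1/(2n))∑_{j≠i} 1/(s_i+s_j) + α_n/(2s_i)] dt driven by the same Brownian motions, with all particles strictly positive and strictly ordered, and α_n ≥ 0. Then t ↦ ∑_{i=1}^n (s̃_i(t) − s_i(t))² is nonincreasing. -/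
open Finset

lemma sum_pairs_nonpos {n : ℕ} (f : Fin n → Fin n → ℝ)
    (h : ∀ i j : Fin n, i ≠ j → f i j + f j i ≤ 0) :
    ∑ i : Fin n, ∑ j ∈ Finset.univ.filter (fun j => j ≠ i), f i j ≤ 0 := by
  have h1 : ∑ i : Fin n, ∑ j ∈ Finset.univ.filter (fun j => j ≠ i), f i j
      = ∑ p ∈ Finset.univ.offDiag, f p.1 p.2 := by
    rw [show (Finset.univ : Finset (Fin n)).offDiag = (Finset.univ ×ˢ Finset.univ).filter (fun a : Fin n × Fin n => a.1 ≠ a.2) by ext; simp, Finset.sum_filter, Finset.sum_product]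
    refine Finset.sum_congr rfl fun i _ => ?_
    rw [Finset.sum_filter]
    refine Finset.sum_congr rfl fun j _ => ?_
    by_cases hij : j = i
    · simp [hij]
    · simp only [Ne]
      rw [if_pos hij, if_pos (fun h => hij h.symm)]
  have h2 : ∑ p ∈ Finset.univ.offDiag, f p.1 p.2
      = ∑ p ∈ Finset.univ.offDiag, f p.2 p.1 := by
    apply Finset.sum_nbij' (fun p => (p.2, p.1)) (fun p => (p.2, p.1)) <;>
      simp [Finset.mem_offDiag, eq_comm, Ne]
  have h3 : (2:ℝ) * ∑ p ∈ Finset.univ.offDiag, f p.1 p.2 ≤ 0 := by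
    rw [two_mul]
    nth_rewrite 2 [h2]
    rw [← Finset.sum_add_distrib]
    apply Finset.sum_nonpos
    intro p hp
    exact h p.1 p.2 (Finset.mem_offDiag.mp hp).2.2
  rw [h1]
  linarith

lemma key_ineq {n : ℕ} (αn : ℝ) (hα : 0 ≤ αn) (a b : Fin n → ℝ)
    (hpa : ∀ i, 0 < a i) (hpb : ∀ i, 0 < b i)
    (horda : ∀ i j : Fin n, i < j → a j < a i)
    (hordb : ∀ i j : Fin n, i < j → b j < b i) :
    ∑ i : Fin n, 2 * (b i - a i) *
      (((1 / (2 * (n:ℝ))) * ∑ j ∈ Finset.univ.filter (fun j => j ≠ i), 1 / (b i - b j)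
          + (1 / (2 * (n:ℝ))) * ∑ j ∈ Finset.univ.filter (fun j => j ≠ i), 1 / (b i + b j)
          + αn / (2 * b i))
        - ((1 / (2 * (n:ℝ))) * ∑ j ∈ Finset.univ.filter (fun j => j ≠ i), 1 / (a i - a j)
          + (1 / (2 * (n:ℝ))) * ∑ j ∈ Finset.univ.filter (fun j => j ≠ i), 1 / (a i + a j)
          + αn / (2 * a i))) ≤ 0 := by
  have hane : ∀ i j : Fin n, i ≠ j → a i - a j ≠ 0 := by
    intro i j hij
    rcases lt_or_gt_of_ne hij with h | h
    · exact ne_of_gt (sub_pos.mpr (horda i j h))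
    · exact ne_of_lt (sub_neg.mpr (horda j i h))
  have hbne : ∀ i j : Fin n, i ≠ j → b i - b j ≠ 0 := by
    intro i j hij
    rcases lt_or_gt_of_ne hij with h | h
    · exact ne_of_gt (sub_pos.mpr (hordb i j h))
    · exact ne_of_lt (sub_neg.mpr (hordb j i h))
  have hprod : ∀ i j : Fin n, i ≠ j → 0 < (b i - b j) * (a i - a j) := by
    intro i j hij
    rcases lt_or_gt_of_ne hij with h | h
    · exact mul_pos (sub_pos.mpr (hordb i j h)) (sub_pos.mpr (horda i j h))
    · exact mul_pos_of_neg_of_neg (sub_neg.mpr (hordb j i h)) (sub_neg.mpr (horda j i h))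
  have hS1 : ∑ i : Fin n, ∑ j ∈ Finset.univ.filter (fun j => j ≠ i),
      (b i - a i) * (1 / (b i - b j) - 1 / (a i - a j)) ≤ 0 := by
    apply sum_pairs_nonpos
    intro i j hij
    have ha := hane i j hij
    have hb := hbne i j hij
    have ha' := hane j i hij.symm
    have hb' := hbne j i hij.symm
    have key : (b i - a i) * (1 / (b i - b j) - 1 / (a i - a j))
        + (b j - a j) * (1 / (b j - b i) - 1 / (a j - a i))
        = -(((b i - a i) - (b j - a j)) ^ 2 / ((b i - b j) * (a i - a j))) := by
      field_simp
      ring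
    rw [key]
    exact neg_nonpos.mpr (div_nonneg (sq_nonneg _) (hprod i j hij).le)
  have hS2 : ∑ i : Fin n, ∑ j ∈ Finset.univ.filter (fun j => j ≠ i),
      (b i - a i) * (1 / (b i + b j) - 1 / (a i + a j)) ≤ 0 := by
    apply sum_pairs_nonpos
    intro i j _
    have ha : (0:ℝ) < a i + a j := by have := hpa i; have := hpa j; linarith
    have hb : (0:ℝ) < b i + b j := by have := hpb i; have := hpb j; linarith
    have key : (b i - a i) * (1 / (b i + b j) - 1 / (a i + a j))
        + (b j - a j) * (1 / (b j + b i) - 1 / (a j + a i))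
        = -(((b i - a i) + (b j - a j)) ^ 2 / ((b i + b j) * (a i + a j))) := by
      have ha' : a j + a i ≠ 0 := by linarith
      have hb' : b j + b i ≠ 0 := by linarith
      field_simp
      ring
    rw [key]
    exact neg_nonpos.mpr (div_nonneg (sq_nonneg _) (mul_pos hb ha).le)
  have hS3 : ∑ i : Fin n, (b i - a i) * (1 / b i - 1 / a i) ≤ 0 := by
    apply Finset.sum_nonpos
    intro i _
    have ha := hpa i
    have hb := hpb i
    have key : (b i - a i) * (1 / b i - 1 / a i)
        = -((b i - a i) ^ 2 / (b i * a i)) := by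
      field_simp
      ring
    rw [key]
    exact neg_nonpos.mpr (div_nonneg (sq_nonneg _) (mul_pos hb ha).le)
  have expand : ∑ i : Fin n, 2 * (b i - a i) *
      (((1 / (2 * (n:ℝ))) * ∑ j ∈ Finset.univ.filter (fun j => j ≠ i), 1 / (b i - b j)
          + (1 / (2 * (n:ℝ))) * ∑ j ∈ Finset.univ.filter (fun j => j ≠ i), 1 / (b i + b j)
          + αn / (2 * b i))
        - ((1 / (2 * (n:ℝ))) * ∑ j ∈ Finset.univ.filter (fun j => j ≠ i), 1 / (a i - a j)
          + (1 / (2 * (n:ℝ))) * ∑ j ∈ Finset.univ.filter (fun j => j ≠ i), 1 / (a i + a j)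
          + αn / (2 * a i)))
      = (1 / (n:ℝ)) * ∑ i : Fin n, ∑ j ∈ Finset.univ.filter (fun j => j ≠ i),
          (b i - a i) * (1 / (b i - b j) - 1 / (a i - a j))
        + (1 / (n:ℝ)) * ∑ i : Fin n, ∑ j ∈ Finset.univ.filter (fun j => j ≠ i),
          (b i - a i) * (1 / (b i + b j) - 1 / (a i + a j))
        + αn * ∑ i : Fin n, (b i - a i) * (1 / b i - 1 / a i) := by
    rw [Finset.mul_sum, Finset.mul_sum, Finset.mul_sum, ← Finset.sum_add_distrib,
      ← Finset.sum_add_distrib]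
    refine Finset.sum_congr rfl fun i _ => ?_
    simp only [mul_sub, Finset.sum_sub_distrib, Finset.mul_sum]
    simp only [← Finset.mul_sum]
    ring
  rw [expand]
  have hn0 : (0:ℝ) ≤ 1 / (n:ℝ) := by positivity
  have t1 := mul_nonpos_of_nonneg_of_nonpos hn0 hS1
  have t2 := mul_nonpos_of_nonneg_of_nonpos hn0 hS2
  have t3 := mul_nonpos_of_nonneg_of_nonpos hα hS3
  linarith

/-- Two Dyson Bessel processes driven by the same noise: the squared distance between
particle configurations is nonincreasing. -/
theorem stmt6 (n : ℕ) (hn : 1 ≤ n) (β αn : ℝ) (hβ : 1 ≤ β) (hα : 0 ≤ αn)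
    (T : ℝ) (hT : 0 < T)
    (s st : Fin n → ℝ → ℝ)
    (hpos : ∀ t ∈ Set.Icc (0:ℝ) T, ∀ i : Fin n, 0 < s i t)
    (hpost : ∀ t ∈ Set.Icc (0:ℝ) T, ∀ i : Fin n, 0 < st i t)
    (hord : ∀ t ∈ Set.Icc (0:ℝ) T, ∀ i j : Fin n, i < j → s j t < s i t)
    (hordt : ∀ t ∈ Set.Icc (0:ℝ) T, ∀ i j : Fin n, i < j → st j t < st i t)
    (hdiff : ∀ i : Fin n, ∀ t ∈ Set.Icc (0:ℝ) T,
      HasDerivAt (fun u => st i u - s i u)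
        (((1 / (2 * (n:ℝ))) * ∑ j ∈ Finset.univ.filter (fun j => j ≠ i), 1 / (st i t - st j t)
            + (1 / (2 * (n:ℝ))) * ∑ j ∈ Finset.univ.filter (fun j => j ≠ i), 1 / (st i t + st j t)
            + αn / (2 * st i t))
          - ((1 / (2 * (n:ℝ))) * ∑ j ∈ Finset.univ.filter (fun j => j ≠ i), 1 / (s i t - s j t)
            + (1 / (2 * (n:ℝ))) * ∑ j ∈ Finset.univ.filter (fun j => j ≠ i), 1 / (s i t + s j t)
            + αn / (2 * s i t))) t) :
    AntitoneOn (fun t => ∑ i : Fin n, (st i t - s i t) ^ 2) (Set.Icc (0:ℝ) T) := by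
  have hD : ∀ t ∈ Set.Icc (0:ℝ) T,
      HasDerivAt (fun u => ∑ i : Fin n, (st i u - s i u) ^ 2)
        (∑ i : Fin n, 2 * (st i t - s i t) *
          (((1 / (2 * (n:ℝ))) * ∑ j ∈ Finset.univ.filter (fun j => j ≠ i), 1 / (st i t - st j t)
              + (1 / (2 * (n:ℝ))) * ∑ j ∈ Finset.univ.filter (fun j => j ≠ i), 1 / (st i t + st j t)
              + αn / (2 * st i t))
            - ((1 / (2 * (n:ℝ))) * ∑ j ∈ Finset.univ.filter (fun j => j ≠ i), 1 / (s i t - s j t)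
              + (1 / (2 * (n:ℝ))) * ∑ j ∈ Finset.univ.filter (fun j => j ≠ i), 1 / (s i t + s j t)
              + αn / (2 * s i t)))) t := by
    intro t ht
    apply HasDerivAt.fun_sum
    intro i _
    have h := (hdiff i t ht).fun_pow 2
    convert h using 1
    all_goals norm_num
    rfl
  apply antitoneOn_of_deriv_nonpos (convex_Icc 0 T)
  · intro t ht
    exact (hD t ht).continuousAt.continuousWithinAt
  · rw [interior_Icc]
    intro t ht
    exact (hD t (Set.Ioo_subset_Icc_self ht)).differentiableAt.differentiableWithinAt
  · rw [interior_Icc]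
    intro t ht
    have ht' := Set.Ioo_subset_Icc_self ht
    rw [(hD t ht').deriv]
    exact key_ineq αn hα (fun i => s i t) (fun i => st i t)
      (fun i => hpos t ht' i) (fun i => hpost t ht' i)
      (fun i j h => hord t ht' i j h) (fun i j h => hordt t ht' i j h)
end

section
/- Let ρ : ℝ → [0,∞) be a probability density with ‖ρ'‖_∞ < ∞, and let γ_i, γ_{i+k} satisfy ∫_{γ_i}^{γ_{i+k}} ρ(x)dx = k/n with γ_{i+k} > γ_i. If ρ(γ_i) > 0 and k‖ρ'‖_∞ ≤ n·ρ(γ_i)²/2, then |γ_{i+k} − γ_i − k/(n ρ(γ_i))| ≤ C·(k/(n ρ(γ_i)))·(k‖ρ'‖_∞/(n ρ(γ_i)²)) for an absolute constant C. -/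
open MeasureTheory Set Filter intervalIntegral

-- Lipschitz bound from bounded derivative
lemma mylip {ρ : ℝ → ℝ} (hd : Differentiable ℝ ρ) {K : ℝ} (hK : ∀ x, |deriv ρ x| ≤ K) :
    ∀ x y : ℝ, |ρ x - ρ y| ≤ K * |x - y| := by
  have hK0 : 0 ≤ K := le_trans (abs_nonneg _) (hK 0)
  have h := lipschitzWith_of_nnnorm_deriv_le (𝕜 := ℝ) hd (C := K.toNNReal) (fun x => by
    rw [← NNReal.coe_le_coe]
    simpa [Real.norm_eq_abs, Real.coe_toNNReal _ hK0] using hK x)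
  intro x y
  have := h.dist_le_mul x y
  simpa [Real.dist_eq, Real.coe_toNNReal _ hK0] using this

-- zero integral of nonneg continuous ⇒ zero on open interval
lemma myzero {g : ℝ → ℝ} (hg : Continuous g) {a b : ℝ} (hab : a < b)
    (hnn : ∀ x ∈ Set.Ioc a b, 0 ≤ g x)
    (h0 : (∫ x in Set.Ioc a b, g x) = 0) : ∀ x ∈ Set.Ioo a b, g x = 0 := by
  by_contra h
  push_neg at h
  obtain ⟨q, hq, hq0⟩ := h
  have hint : IntegrableOn g (Set.Ioc a b) := (hg.integrableOn_Ioc)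
  have hpos : 0 < ∫ x in Set.Ioc a b, g x := by
    rw [setIntegral_pos_iff_support_of_nonneg_ae
      (MeasureTheory.ae_restrict_of_forall_mem measurableSet_Ioc hnn) hint]
    have hopen : IsOpen (Function.support g ∩ Set.Ioo a b) :=
      (isOpen_compl_singleton.preimage hg).inter isOpen_Ioo
    have hne : (Function.support g ∩ Set.Ioo a b).Nonempty := ⟨q, by
      simp [Function.mem_support, hq0, hq]⟩
    have := hopen.measure_pos (μ := volume) hne
    refine lt_of_lt_of_le this (measure_mono ?_)
    exact Set.inter_subset_inter_right _ Set.Ioo_subset_Ioc_self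
  rw [h0] at hpos
  exact lt_irrefl _ hpos

-- linear integral computation
lemma mylin (r K a b : ℝ) :
    (∫ x in a..b, (r - K * (x - a))) = (b - a) * r - K * (b - a) ^ 2 / 2 := by
  have h1 : (∫ x in a..b, (r - K * (x - a)))
      = (∫ x in a..b, r) - K * ∫ x in a..b, (x - a) := by
    rw [intervalIntegral.integral_sub (Continuous.intervalIntegrable (by continuity) _ _) (Continuous.intervalIntegrable (by continuity) _ _),
      intervalIntegral.integral_const_mul]
  rw [h1]
  have h2 : (∫ x in a..b, (x - a)) = (b ^ 2 - a ^ 2) / 2 - a * (b - a) := by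
    rw [intervalIntegral.integral_sub (Continuous.intervalIntegrable (by continuity) _ _) (Continuous.intervalIntegrable (by continuity) _ _)]
    simp [integral_id, mul_comm]
  rw [h2]
  simp [mul_comm]
  ring

-- key upper bound: L ≤ 2m/r
set_option maxHeartbeats 1000000 in
lemma mykey {ρ : ℝ → ℝ} (hnn : ∀ x, 0 ≤ ρ x) (hd : Differentiable ℝ ρ)
    {K : ℝ} (hK : ∀ x, |deriv ρ x| ≤ K) (hKpos : 0 < K)
    {a b : ℝ} (hab : a < b) {m : ℝ} (hm : 0 < m)
    (hint : (∫ x in Set.Ioc a b, ρ x) = m)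
    (hr : 0 < ρ a) (hKm : m * K ≤ (ρ a) ^ 2 / 2) :
    b - a ≤ 2 * m / ρ a := by
  by_contra hcon
  push_neg at hcon
  obtain ⟨r, hrdef⟩ : ∃ r, r = ρ a := ⟨_, rfl⟩
  rw [← hrdef] at hr hKm hcon
  have hrne : r ≠ 0 := ne_of_gt hr
  obtain ⟨s, hsdef⟩ : ∃ s, s = 2 * m / r := ⟨_, rfl⟩
  rw [← hsdef] at hcon
  have hs0 : 0 < s := by rw [hsdef]; positivity
  obtain ⟨p, hpdef⟩ : ∃ p, p = a + s := ⟨_, rfl⟩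
  have hpb : p < b := by rw [hpdef]; linarith
  have hap : a < p := by rw [hpdef]; linarith
  have hcont : Continuous ρ := hd.continuous
  have hsr : s * r = 2 * m := by rw [hsdef]; field_simp
  -- split the integral
  obtain ⟨A, hAdef⟩ : ∃ A, A = ∫ x in Set.Ioc a p, ρ x := ⟨_, rfl⟩
  obtain ⟨B, hBdef⟩ : ∃ B, B = ∫ x in Set.Ioc p b, ρ x := ⟨_, rfl⟩
  have hAB : A + B = m := by
    rw [hAdef, hBdef, ← intervalIntegral.integral_of_le hap.le,
      ← intervalIntegral.integral_of_le hpb.le,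
      intervalIntegral.integral_add_adjacent_intervals
        (hcont.intervalIntegrable _ _) (hcont.intervalIntegrable _ _),
      intervalIntegral.integral_of_le (hap.le.trans hpb.le), hint]
  have hB0 : 0 ≤ B := by
    rw [hBdef]; exact setIntegral_nonneg measurableSet_Ioc fun x _ => hnn x
  -- pointwise lower bound
  have hptwise : ∀ x ∈ Set.Icc a p, r - K * (x - a) ≤ ρ x := by
    intro x hx
    have h0 := mylip hd hK x a
    have h1 : |x - a| = x - a := abs_of_nonneg (by linarith [hx.1])
    rw [h1, ← hrdef] at h0
    have := (abs_le.mp h0).1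
    linarith
  have hA_lb : s * r - K * s ^ 2 / 2 ≤ A := by
    have hmono : (∫ x in a..p, (r - K * (x - a))) ≤ ∫ x in a..p, ρ x := by
      apply intervalIntegral.integral_mono_on hap.le
        (Continuous.intervalIntegrable (by continuity) _ _)
        (hcont.intervalIntegrable _ _) hptwise
    rw [mylin, intervalIntegral.integral_of_le hap.le, ← hAdef] at hmono
    have hps : p - a = s := by rw [hpdef]; ring
    rw [hps] at hmono
    exact hmono
  have hKs2 : K * s ^ 2 / 2 ≤ m := by
    have h1 : K * s ^ 2 / 2 = 2 * K * m ^ 2 / r ^ 2 := by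
      rw [hsdef]; field_simp
    rw [h1, div_le_iff₀ (by positivity : (0:ℝ) < r ^ 2)]
    nlinarith [mul_le_mul_of_nonneg_left hKm hm.le]
  -- equality chain
  have hAle : A ≤ m := by linarith
  have hAeq : A = m := le_antisymm hAle (by linarith)
  have hBeq : B = 0 := by linarith
  have hKs2eq : K * s ^ 2 / 2 = m := by linarith
  have hKs : K * s = r := by
    have h2 : K * s * s = r * s := by
      have e1 : K * s ^ 2 = 2 * m := by linarith
      calc K * s * s = K * s ^ 2 := by ring
        _ = 2 * m := e1
        _ = s * r := hsr.symm
        _ = r * s := by ring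
    exact mul_right_cancel₀ hs0.ne' h2
  -- ρ vanishes on (p, b)
  have hB' : (∫ x in Set.Ioc p b, ρ x) = 0 := by rw [← hBdef]; exact hBeq
  have hzero : ∀ x ∈ Set.Ioo p b, ρ x = 0 :=
    myzero hcont hpb (fun x _ => hnn x) hB'
  -- ρ p = 0
  have hρp : ρ p = 0 := by
    have ht : Filter.Tendsto ρ (nhdsWithin p (Set.Ioi p)) (nhds (ρ p)) :=
      (hcont.continuousAt.continuousWithinAt).tendsto
    have hev : ∀ᶠ x in nhdsWithin p (Set.Ioi p), ρ x = 0 := by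
      filter_upwards [Ioo_mem_nhdsGT_of_mem ⟨le_refl p, hpb⟩] with x hx
      exact hzero x hx
    have ht0 : Filter.Tendsto ρ (nhdsWithin p (Set.Ioi p)) (nhds 0) := by
      rw [Filter.tendsto_congr' hev]
      exact tendsto_const_nhds
    exact tendsto_nhds_unique ht ht0
  -- ρ is linear on (a, p)
  have hlin : ∀ x ∈ Set.Ioo a p, ρ x = r - K * (x - a) := by
    have hintlin : (∫ x in Set.Ioc a p, (r - K * (x - a))) = s * r - K * s ^ 2 / 2 := by
      rw [← intervalIntegral.integral_of_le hap.le, mylin]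
      have hps : p - a = s := by rw [hpdef]; ring
      rw [hps]
    have hdiff : (∫ x in Set.Ioc a p, (ρ x - (r - K * (x - a)))) = 0 := by
      rw [MeasureTheory.integral_sub (hcont.integrableOn_Ioc)
        ((Continuous.integrableOn_Ioc (by fun_prop)))]
      rw [← hAdef, hintlin, hAeq, ← hKs2eq]
      linarith
    have hz := myzero (g := fun x => ρ x - (r - K * (x - a))) (by fun_prop) hap
      (fun x hx => by simpa using hptwise x ⟨hx.1.le, hx.2⟩) hdiff
    intro x hx
    have := hz x hx
    simp only [sub_eq_zero] at this
    exact this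
  -- p is a global minimum of ρ, hence deriv ρ p = 0
  have hmin : IsLocalMin ρ p :=
    Filter.Eventually.of_forall fun x => by rw [hρp]; exact hnn x
  have hder : HasDerivAt ρ 0 p := by
    have h := (hd p).hasDerivAt
    rwa [hmin.deriv_eq_zero] at h
  have hslope : Filter.Tendsto (slope ρ p) (nhdsWithin p {p}ᶜ) (nhds 0) :=
    hasDerivAt_iff_tendsto_slope.mp hder
  have hslope' : Filter.Tendsto (slope ρ p) (nhdsWithin p (Set.Iio p)) (nhds 0) :=
    hslope.mono_left (nhdsWithin_mono _ fun x hx => ne_of_lt hx)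
  have hevs : ∀ᶠ x in nhdsWithin p (Set.Iio p), slope ρ p x = -K := by
    filter_upwards [Ioo_mem_nhdsLT_of_mem ⟨hap, le_refl p⟩] with x hx
    have hxp : x ≠ p := ne_of_lt hx.2
    rw [slope_def_field]
    rw [div_eq_iff (sub_ne_zero.mpr hxp)]
    rw [hlin x hx, hρp]
    have hrKs : r = K * s := hKs.symm
    rw [hrKs, hpdef]
    ring
  have hconst : Filter.Tendsto (slope ρ p) (nhdsWithin p (Set.Iio p)) (nhds (-K)) := by
    rw [Filter.tendsto_congr' hevs]
    exact tendsto_const_nhds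
  have hfin : (0 : ℝ) = -K := tendsto_nhds_unique hslope' hconst
  linarith

/-- Quantile gaps: if ∫_{γᵢ}^{γᵢ₊ₖ} ρ = k/n, ρ(γᵢ) > 0 and k‖ρ'‖_∞ ≤ n ρ(γᵢ)²/2, then
γᵢ₊ₖ − γᵢ = (k/(n ρ(γᵢ)))(1 + O(k‖ρ'‖_∞/(n ρ(γᵢ)²))) with an absolute constant. -/
theorem stmt11 :
    ∃ C : ℝ, 0 < C ∧
      ∀ (n k : ℕ), 0 < n → 0 < k → ∀ (K : ℝ) (ρ : ℝ → ℝ),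
        (∀ x, 0 ≤ ρ x) → Differentiable ℝ ρ → (∀ x, |deriv ρ x| ≤ K) →
        ∀ γi γik : ℝ, γi < γik →
          (∫ x in Set.Ioc γi γik, ρ x) = (k : ℝ) / (n : ℝ) →
          0 < ρ γi → (k : ℝ) * K ≤ (n : ℝ) * (ρ γi) ^ 2 / 2 →
          |γik - γi - (k : ℝ) / ((n : ℝ) * ρ γi)|
            ≤ C * ((k : ℝ) / ((n : ℝ) * ρ γi)) * ((k : ℝ) * K / ((n : ℝ) * (ρ γi) ^ 2)) := by
  refine ⟨2, by norm_num, ?_⟩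
  intro n k hn hk K ρ hnn hd hK γi γik hlt hint hr hKn
  have hK0 : 0 ≤ K := le_trans (abs_nonneg _) (hK 0)
  have hnp : (0:ℝ) < (n:ℝ) := by exact_mod_cast hn
  have hkp : (0:ℝ) < (k:ℝ) := by exact_mod_cast hk
  obtain ⟨m, hmdef⟩ : ∃ m:ℝ, m = (k:ℝ)/(n:ℝ) := ⟨_, rfl⟩
  have hm : 0 < m := by rw [hmdef]; positivity
  have hint' : (∫ x in Set.Ioc γi γik, ρ x) = m := by rw [hmdef]; exact hint
  have hcont : Continuous ρ := hd.continuous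
  -- pointwise bounds
  have hpt : ∀ x ∈ Set.Icc γi γik,
      ρ γi - K * (x - γi) ≤ ρ x ∧ ρ x ≤ ρ γi + K * (x - γi) := by
    intro x hx
    have h0 := mylip hd hK x γi
    have h1 : |x - γi| = x - γi := abs_of_nonneg (by linarith [hx.1])
    rw [h1] at h0
    obtain ⟨hl, hu⟩ := abs_le.mp h0
    exact ⟨by linarith, by linarith⟩
  -- integral sandwich
  have h1 : (γik - γi) * ρ γi - K * (γik - γi) ^ 2 / 2 ≤ m := by
    have hmono : (∫ x in γi..γik, (ρ γi - K * (x - γi))) ≤ ∫ x in γi..γik, ρ x :=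
      intervalIntegral.integral_mono_on hlt.le
        (Continuous.intervalIntegrable (by fun_prop) _ _)
        (hcont.intervalIntegrable _ _) (fun x hx => (hpt x hx).1)
    rw [mylin, intervalIntegral.integral_of_le hlt.le, hint'] at hmono
    exact hmono
  have h2 : m ≤ (γik - γi) * ρ γi + K * (γik - γi) ^ 2 / 2 := by
    have hmono : (∫ x in γi..γik, ρ x) ≤ ∫ x in γi..γik, (ρ γi + K * (x - γi)) :=
      intervalIntegral.integral_mono_on hlt.le
        (hcont.intervalIntegrable _ _)
        (Continuous.intervalIntegrable (by fun_prop) _ _) (fun x hx => (hpt x hx).2)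
    have hcomp := mylin (ρ γi) (-K) γi γik
    simp only [neg_mul, sub_neg_eq_add] at hcomp
    rw [hcomp, intervalIntegral.integral_of_le hlt.le, hint'] at hmono
    linarith
  -- upper bound on the gap
  have hL : γik - γi ≤ 2 * m / ρ γi := by
    rcases eq_or_lt_of_le hK0 with hK0' | hKpos
    · have hz : K * (γik - γi) ^ 2 / 2 = 0 := by rw [← hK0']; ring
      rw [le_div_iff₀ hr]
      nlinarith [h1, hz, hm]
    · have hKm : m * K ≤ (ρ γi) ^ 2 / 2 := by
        rw [hmdef, div_mul_eq_mul_div, div_le_iff₀ hnp]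
        nlinarith [hKn]
      exact mykey hnn hd hK hKpos hlt hm hint' hr hKm
  -- final arithmetic
  obtain ⟨r, hrdef⟩ : ∃ r, r = ρ γi := ⟨_, rfl⟩
  rw [← hrdef] at h1 h2 hL hr ⊢
  have hrne : r ≠ 0 := ne_of_gt hr
  have hnne : (n:ℝ) ≠ 0 := ne_of_gt hnp
  have hmr : (k:ℝ)/((n:ℝ)*r) = m/r := by rw [hmdef]; field_simp
  have hT : (2:ℝ) * (m/r) * ((k:ℝ)*K/((n:ℝ)*r^2)) = 2*K*m^2/r^3 := by
    rw [hmdef]; field_simp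
  rw [hmr, hT]
  have hLr : (γik - γi) * r ≤ 2 * m := (le_div_iff₀ hr).mp hL
  have habs : |(γik - γi) * r - m| ≤ K * (γik - γi)^2 / 2 :=
    abs_le.mpr ⟨by linarith, by linarith⟩
  have heq : γik - γi - m/r = ((γik - γi) * r - m)/r := by
    field_simp
  rw [heq, abs_div, abs_of_pos hr, div_le_div_iff₀ hr (by positivity)]
  have hLnn : 0 ≤ (γik - γi) * r := mul_nonneg (by linarith) hr.le
  have hsq : ((γik - γi) * r) * ((γik - γi) * r) ≤ (2*m) * (2*m) :=
    mul_self_le_mul_self hLnn hLr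
  nlinarith [mul_le_mul_of_nonneg_right habs (by positivity : (0:ℝ) ≤ r^3),
    mul_le_mul_of_nonneg_left hsq (mul_nonneg hK0 hr.le)]
end

section
/- Let γ_1 < γ_2 < ⋯ < γ_n be reals and ρ a probability density with ∫_{−∞}^{γ_j} ρ(x)dx = (j−1/2)/n for each j. Then for any index i and any 1 ≤ d ≤ i−1, |∫_{−∞}^{γ_{i−d}} ρ(x)/(γ_i − x) dx − ∑_{j=1}^{i−d} 1/(n(γ_i − γ_j))| ≤ 1/(n(γ_i − γ_{i−d})). -/
open MeasureTheory Finset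

/-- Discrete approximation of the truncated Hilbert transform by quantiles. -/
theorem stmt12 (n : ℕ) (hn : 1 ≤ n) (ρ : ℝ → ℝ) (hρ : ∀ x, 0 ≤ ρ x)
    (hint : Integrable ρ) (hprob : ∫ x, ρ x = 1)
    (γ : ℕ → ℝ)
    (hmono : ∀ j k : ℕ, 1 ≤ j → j < k → k ≤ n → γ j < γ k)
    (hquant : ∀ j : ℕ, 1 ≤ j → j ≤ n →
      ∫ x in Set.Iic (γ j), ρ x = ((j : ℝ) - 1/2) / (n : ℝ))
    (i d : ℕ) (hi : i ≤ n) (hd1 : 1 ≤ d) (hd2 : d ≤ i - 1) :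
    |(∫ x in Set.Iic (γ (i - d)), ρ x / (γ i - x))
        - ∑ j ∈ Finset.Icc 1 (i - d), 1 / ((n : ℝ) * (γ i - γ j))|
      ≤ 1 / ((n : ℝ) * (γ i - γ (i - d))) := by
  have hi2 : 2 ≤ i := by omega
  have hm1 : 1 ≤ i - d := by omega
  have hmi : i - d ≤ i - 1 := by omega
  have hnpos : (0 : ℝ) < n := by exact_mod_cast hn
  have hγi : ∀ j, 1 ≤ j → j ≤ i - 1 → γ j < γ i := fun j h1 h2 =>
    hmono j i h1 (by omega) hi
  set f : ℝ → ℝ := fun x => ρ x / (γ i - x) with hf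
  have hmeas : AEStronglyMeasurable f volume := by
    have hfe : f = fun x => ρ x * (γ i - x)⁻¹ := by
      funext x; simp [hf, div_eq_mul_inv]
    rw [hfe]
    exact hint.aestronglyMeasurable.mul
      (((continuous_const.sub continuous_id).measurable.inv).aestronglyMeasurable)
  -- integrability of f on Iic c for c < γ i
  have hInt : ∀ c : ℝ, c < γ i → IntegrableOn f (Set.Iic c) := by
    intro c hc
    have hg : IntegrableOn (fun x => ρ x / (γ i - c)) (Set.Iic c) :=
      (hint.div_const _).integrableOn
    refine Integrable.mono hg hmeas.restrict ?_
    rw [ae_restrict_iff' measurableSet_Iic]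
    filter_upwards with x hx
    have h1 : (0 : ℝ) < γ i - c := by linarith
    have h2 : γ i - c ≤ γ i - x := by exact sub_le_sub_left hx _
    have hfx : 0 ≤ f x := div_nonneg (hρ x) (by linarith)
    have hgx : 0 ≤ ρ x / (γ i - c) := div_nonneg (hρ x) h1.le
    rw [Real.norm_eq_abs, Real.norm_eq_abs, abs_of_nonneg hfx, abs_of_nonneg hgx]
    exact div_le_div_of_nonneg_left (hρ x) h1 h2
  -- splitting of integrals
  have hsplit : ∀ (g : ℝ → ℝ) (a b : ℝ), a ≤ b → IntegrableOn g (Set.Iic b) →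
      ∫ x in Set.Iic b, g x =
        (∫ x in Set.Iic a, g x) + ∫ x in Set.Ioc a b, g x := by
    intro g a b hab hg
    rw [← Set.Iic_union_Ioc_eq_Iic hab] at hg ⊢
    exact setIntegral_union (Set.Iic_disjoint_Ioc le_rfl) measurableSet_Ioc
      (hg.mono_set Set.subset_union_left) (hg.mono_set Set.subset_union_right)
  -- measure of each middle piece
  have hpiece : ∀ k, 1 ≤ k → k + 1 ≤ n →
      ∫ x in Set.Ioc (γ k) (γ (k + 1)), ρ x = 1 / n := by
    intro k h1 h2
    have hlt : γ k < γ (k + 1) := hmono k (k + 1) h1 (by omega) h2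
    have := hsplit ρ (γ k) (γ (k + 1)) hlt.le hint.integrableOn
    rw [hquant (k + 1) (by omega) h2, hquant k h1 (by omega)] at this
    have : ((k : ℝ) + 1 - 1 / 2) / n = ((k : ℝ) - 1 / 2) / n +
        ∫ x in Set.Ioc (γ k) (γ (k + 1)), ρ x := by
      rw [← this]; push_cast; ring_nf
    field_simp at this ⊢
    linarith
  -- sandwich for a middle piece
  have hmid : ∀ a b : ℝ, a < b → b < γ i → (∫ x in Set.Ioc a b, ρ x) = 1 / n →
      1 / ((n : ℝ) * (γ i - a)) ≤ (∫ x in Set.Ioc a b, f x) ∧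
      (∫ x in Set.Ioc a b, f x) ≤ 1 / ((n : ℝ) * (γ i - b)) := by
    intro a b hab hb hmeasure
    have hbpos : (0 : ℝ) < γ i - b := by linarith
    have hapos : (0 : ℝ) < γ i - a := by linarith
    have hIf : IntegrableOn f (Set.Ioc a b) :=
      (hInt b hb).mono_set Set.Ioc_subset_Iic_self
    constructor
    · have hle : ∀ x ∈ Set.Ioc a b, ρ x / (γ i - a) ≤ f x := by
        intro x hx
        exact div_le_div_of_nonneg_left (hρ x) (by linarith [hx.2]) (by linarith [hx.1])
      have := setIntegral_mono_on ((hint.div_const _).integrableOn) hIf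
        measurableSet_Ioc hle
      rw [integral_div, hmeasure] at this
      calc 1 / ((n : ℝ) * (γ i - a)) = 1 / n / (γ i - a) := by
            rw [div_div]
        _ ≤ _ := this
    · have hle : ∀ x ∈ Set.Ioc a b, f x ≤ ρ x / (γ i - b) := by
        intro x hx
        exact div_le_div_of_nonneg_left (hρ x) hbpos (by linarith [hx.2])
      have := setIntegral_mono_on hIf ((hint.div_const _).integrableOn)
        measurableSet_Ioc hle
      rw [integral_div, hmeasure] at this
      calc (∫ x in Set.Ioc a b, f x) ≤ 1 / n / (γ i - b) := this
        _ = 1 / ((n : ℝ) * (γ i - b)) := by rw [div_div]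
  -- main induction
  have main : ∀ k, 1 ≤ k → k ≤ i - 1 →
      ((∑ j ∈ Finset.Icc 1 k, 1 / ((n : ℝ) * (γ i - γ j))) - 1 / ((n : ℝ) * (γ i - γ k))
        ≤ ∫ x in Set.Iic (γ k), f x) ∧
      (∫ x in Set.Iic (γ k), f x) ≤ ∑ j ∈ Finset.Icc 1 k, 1 / ((n : ℝ) * (γ i - γ j)) := by
    intro k hk
    induction k, hk using Nat.le_induction with
    | base =>
      intro h1
      have h1i : γ 1 < γ i := hγi 1 le_rfl h1
      have hpos : (0 : ℝ) < γ i - γ 1 := by linarith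
      have hsum : ∑ j ∈ Finset.Icc 1 1, 1 / ((n : ℝ) * (γ i - γ j))
          = 1 / ((n : ℝ) * (γ i - γ 1)) := by simp
      rw [hsum]
      constructor
      · have : (0 : ℝ) ≤ ∫ x in Set.Iic (γ 1), f x := by
          apply setIntegral_nonneg measurableSet_Iic
          intro x hx
          exact div_nonneg (hρ x) (by simp only [Set.mem_Iic] at hx; linarith)
        linarith
      · have hle : ∀ x ∈ Set.Iic (γ 1), f x ≤ ρ x / (γ i - γ 1) := by
          intro x hx
          simp only [Set.mem_Iic] at hx
          exact div_le_div_of_nonneg_left (hρ x) hpos (by linarith)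
        have hcmp := setIntegral_mono_on (hInt (γ 1) h1i) ((hint.div_const _).integrableOn)
          measurableSet_Iic hle
        rw [integral_div, hquant 1 le_rfl (by omega)] at hcmp
        have : ((1 : ℝ) - 1 / 2) / n / (γ i - γ 1) ≤ 1 / ((n : ℝ) * (γ i - γ 1)) := by
          rw [div_div]
          apply div_le_div_of_nonneg_right _ (by positivity)
          · norm_num
        calc (∫ x in Set.Iic (γ 1), f x) ≤ ((1 : ℝ) - 1 / 2) / n / (γ i - γ 1) := by
              exact_mod_cast hcmp
          _ ≤ 1 / ((n : ℝ) * (γ i - γ 1)) := this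
    | succ k hk ih =>
      intro hki
      have hki' : k ≤ i - 1 := by omega
      obtain ⟨ihl, ihu⟩ := ih hki'
      have hlt : γ k < γ (k + 1) := hmono k (k + 1) hk (by omega) (by omega)
      have hk1i : γ (k + 1) < γ i := hγi (k + 1) (by omega) hki
      have hki2 : γ k < γ i := by linarith
      have hP := hpiece k hk (by omega)
      obtain ⟨hml, hmu⟩ := hmid (γ k) (γ (k + 1)) hlt hk1i hP
      have hS := hsplit f (γ k) (γ (k + 1)) hlt.le (hInt (γ (k + 1)) hk1i)
      rw [Finset.sum_Icc_succ_top (by omega : 1 ≤ k + 1)]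
      rw [hS]
      constructor
      · linarith
      · linarith
  obtain ⟨hl, hu⟩ := main (i - d) hm1 hmi
  have hmd : γ (i - d) < γ i := hγi (i - d) hm1 hmi
  have hpos : (0 : ℝ) < (n : ℝ) * (γ i - γ (i - d)) := by
    apply mul_pos hnpos; linarith
  rw [abs_le]
  constructor
  · simp only [hf] at hl hu ⊢
    linarith [one_div_pos.mpr hpos]
  · simp only [hf] at hl hu ⊢
    linarith [one_div_pos.mpr hpos]
end
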